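/- arXiv:2008.10507 — 2 statements merged into one kernel-verified Lean document; each statement's English description precedes it below -/
import Mathlib

section
/- At every point (η,v)∈(0,L)×ℝ³ with ζ(η;v)>0 (where ζ is differentiable), the weight ζ is annihilated by the geometrically corrected transport operator: v_η ∂_η ζ − (ε/(R₁−εη))(v_φ² ∂_{v_η}ζ − v_ηv_φ ∂_{v_φ}ζ) − (ε/(R₂−εη))(v_ψ² ∂_{v_η}ζ − v_ηv_ψ ∂_{v_ψ}ζ) = 0. -/
open Real MeasureTheory

noncomputable section

/-- Velocity space ℝ³ with Euclidean norm. -/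
abbrev V3 : Type := EuclideanSpace ℝ (Fin 3)

/-- Japanese bracket ⟨v⟩ = (1+|v|²)^{1/2}. -/
def jbr (v : V3) : ℝ := Real.sqrt (1 + ‖v‖ ^ 2)

/-- Weight ⟨v⟩^ϑ e^{ϱ|v|²}. -/
def wt (ϑ ϱ : ℝ) (v : V3) : ℝ := jbr v ^ ϑ * Real.exp (ϱ * ‖v‖ ^ 2)

/-- Global Maxwellian μ(v) = (2π)⁻¹ e^{-|v|²/2}. -/
def Mw (v : V3) : ℝ := (2 * π)⁻¹ * Real.exp (-‖v‖ ^ 2 / 2)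

/-- Hard-sphere collision frequency ν. -/
def nuF (q₀ : ℝ) (v : V3) : ℝ :=
  π ^ 2 * q₀ *
    ((2 * ‖v‖ + 1 / ‖v‖) * (∫ z in (0:ℝ)..‖v‖, Real.exp (-z ^ 2)) + Real.exp (-‖v‖ ^ 2))

/-- Kernel k₁. -/
def ker1 (q₀ : ℝ) (u v : V3) : ℝ :=
  π * q₀ * ‖u - v‖ * Real.exp (-‖u‖ ^ 2 / 2 - ‖v‖ ^ 2 / 2)

/-- Kernel k₂. -/
def ker2 (q₀ : ℝ) (u v : V3) : ℝ :=
  (2 * π * q₀ / ‖u - v‖) *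
    Real.exp (-‖u - v‖ ^ 2 / 4 - (‖u‖ ^ 2 - ‖v‖ ^ 2) ^ 2 / (4 * ‖u - v‖ ^ 2))

/-- Kernel k = k₂ − k₁. -/
def ker (q₀ : ℝ) (u v : V3) : ℝ := ker2 q₀ u v - ker1 q₀ u v

/-- Integral operator K. -/
def Kop (q₀ : ℝ) (f : V3 → ℝ) (v : V3) : ℝ := ∫ u : V3, ker q₀ u v * f u

/-- Linearized Boltzmann operator L = ν I − K. -/
def Lop (q₀ : ℝ) (f : V3 → ℝ) (v : V3) : ℝ := nuF q₀ v * f v - Kop q₀ f v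

/-- Basis e₀,…,e₄ of the null space N of L. -/
def eB : Fin 5 → V3 → ℝ :=
  ![fun v => Real.sqrt (Mw v),
    fun v => v 0 * Real.sqrt (Mw v),
    fun v => v 1 * Real.sqrt (Mw v),
    fun v => v 2 * Real.sqrt (Mw v),
    fun v => (‖v‖ ^ 2 - 3) / 2 * Real.sqrt (Mw v)]

/-- Membership in N = span{e₀,…,e₄}. -/
def inN (f : V3 → ℝ) : Prop :=
  ∃ c : Fin 5 → ℝ, ∀ v : V3, f v = ∑ j : Fin 5, c j * eB j v

/-- `p` is the L² orthogonal projection of `f` onto N. -/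
def IsProjN (f p : V3 → ℝ) : Prop :=
  inN p ∧ ∀ j : Fin 5, ∫ v : V3, (f v - p v) * eB j v = 0

/-- Length of the rescaled half-space, L = ε^{-1/2}. -/
def Lm (ε : ℝ) : ℝ := ε ^ (-(1:ℝ)/2)

/-- Reflection R[v] = (−v_η, v_φ, v_ψ). -/
def Rv (v : V3) : V3 :=
  (WithLp.equiv 2 (Fin 3 → ℝ)).symm fun i => if i = 0 then -(v i) else v i

/-- Partial derivative in the i-th velocity direction. -/
def pdv (i : Fin 3) (f : V3 → ℝ) (v : V3) : ℝ :=
  fderiv ℝ f v (EuclideanSpace.single i (1 : ℝ))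

/-- Solution of the ε-Milne problem with geometric correction with in-flow
data `h` and source `S`. -/
def IsMilne (q₀ R₁ R₂ ε : ℝ) (h : V3 → ℝ) (S : ℝ → V3 → ℝ) (g : ℝ → V3 → ℝ) : Prop :=
  (∀ η ∈ Set.Icc (0:ℝ) (Lm ε), ∀ v : V3,
      v 0 * deriv (fun s => g s v) η
        - ε / (R₁ - ε * η) * ((v 1) ^ 2 * pdv 0 (g η) v - v 0 * v 1 * pdv 1 (g η) v)
        - ε / (R₂ - ε * η) * ((v 2) ^ 2 * pdv 0 (g η) v - v 0 * v 2 * pdv 2 (g η) v)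
        + Lop q₀ (g η) v = S η v) ∧
  (∀ v : V3, 0 < v 0 → g 0 v = h v) ∧
  (∀ v : V3, g (Lm ε) v = g (Lm ε) (Rv v))

/-- Sufficient decay in velocity, uniformly on [0, L]. -/
def Decays (ϑ ϱ ε : ℝ) (g : ℝ → V3 → ℝ) : Prop :=
  ∃ M : ℝ, ∀ η ∈ Set.Icc (0:ℝ) (Lm ε), ∀ v : V3, wt ϑ ϱ v * |g η v| ≤ M

/-- Weighted L∞ bound |h|_{∞,ϑ,ϱ} ≤ C₀ for in-flow data. -/
def HBound (ϑ ϱ C₀ : ℝ) (h : V3 → ℝ) : Prop :=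
  ∀ v : V3, 0 < v 0 → wt ϑ ϱ v * |h v| ≤ C₀

/-- Weighted L∞ bound ‖e^{Kη}S‖_{∞,ϑ,ϱ} ≤ C₀ for the source. -/
def SBound (ϑ ϱ K C₀ ε : ℝ) (S : ℝ → V3 → ℝ) : Prop :=
  ∀ η ∈ Set.Icc (0:ℝ) (Lm ε), ∀ v : V3,
    Real.exp (K * η) * wt ϑ ϱ v * |S η v| ≤ C₀

/-- Boundary correction h̃ = D̃₀e₀ + D̃₂e₂ + D̃₃e₃ + D̃₄e₄ ∈ span{e₀,e₂,e₃,e₄}. -/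
def corr (D0 D2 D3 D4 : ℝ) (v : V3) : ℝ :=
  D0 * eB 0 v + D2 * eB 2 v + D3 * eB 3 v + D4 * eB 4 v

/-- Geometric weight ζ. -/
def zeta (R₁ R₂ ε η : ℝ) (v : V3) : ℝ :=
  Real.sqrt (‖v‖ ^ 2 - ((R₁ - ε * η) / R₁) ^ 2 * (v 1) ^ 2
    - ((R₂ - ε * η) / R₂) ^ 2 * (v 2) ^ 2)

set_option maxHeartbeats 2000000

/-- The geometric weight ζ is annihilated by the geometrically corrected
transport operator. -/
theorem zeta_annihilated_by_transport (R₁ R₂ ε : ℝ)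
    (hR₁ : 0 < R₁) (hR₂ : 0 < R₂) (hε₀ : 0 < ε) (hε₁ : ε < 1)
    (η : ℝ) (hη₀ : 0 < η) (hηL : η < Lm ε)
    (hηR₁ : ε * η < R₁) (hηR₂ : ε * η < R₂)
    (v : V3) (hζ : 0 < zeta R₁ R₂ ε η v) :
    v 0 * deriv (fun s => zeta R₁ R₂ ε s v) η
      - ε / (R₁ - ε * η) *
          ((v 1) ^ 2 * pdv 0 (zeta R₁ R₂ ε η) v - v 0 * v 1 * pdv 1 (zeta R₁ R₂ ε η) v)
      - ε / (R₂ - ε * η) *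
          ((v 2) ^ 2 * pdv 0 (zeta R₁ R₂ ε η) v - v 0 * v 2 * pdv 2 (zeta R₁ R₂ ε η) v)
      = 0 := by
  set a : ℝ := (R₁ - ε * η) / R₁ with ha
  set b : ℝ := (R₂ - ε * η) / R₂ with hb
  set Q : ℝ := ‖v‖ ^ 2 - a ^ 2 * (v 1) ^ 2 - b ^ 2 * (v 2) ^ 2 with hQdef
  have hS : zeta R₁ R₂ ε η v = Real.sqrt Q := rfl
  have hSpos : 0 < Real.sqrt Q := hS ▸ hζ
  have hQpos : 0 < Q := by
    by_contra h
    push_neg at h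
    simp [Real.sqrt_eq_zero'] at hSpos
    linarith
  have hQne : Q ≠ 0 := ne_of_gt hQpos
  have hSne : Real.sqrt Q ≠ 0 := ne_of_gt hSpos
  have hR₁' : R₁ - ε * η ≠ 0 := ne_of_gt (by linarith)
  have hR₂' : R₂ - ε * η ≠ 0 := ne_of_gt (by linarith)
  -- spatial derivatives
  have hproj : ∀ i : Fin 3, HasFDerivAt (fun w : V3 => (w i : ℝ))
      (EuclideanSpace.proj i : V3 →L[ℝ] ℝ) v := by
    intro i
    exact (EuclideanSpace.proj (i : Fin 3) : V3 →L[ℝ] ℝ).hasFDerivAt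
  have h1 : HasFDerivAt (fun w : V3 => ‖w‖ ^ 2) ((2:ℕ) • innerSL ℝ v) v := by
    simpa using (hasFDerivAt_id v).norm_sq
  have hF : HasFDerivAt (fun w : V3 => ‖w‖ ^ 2 - a ^ 2 * (w 1) ^ 2 - b ^ 2 * (w 2) ^ 2)
      ((2:ℕ) • innerSL ℝ v - (a ^ 2 * (2 * v 1)) • (EuclideanSpace.proj 1 : V3 →L[ℝ] ℝ)
        - (b ^ 2 * (2 * v 2)) • (EuclideanSpace.proj 2 : V3 →L[ℝ] ℝ)) v := by
    have h2 : HasFDerivAt (fun w : V3 => a ^ 2 * (w 1) ^ 2)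
        ((a ^ 2 * (2 * v 1)) • (EuclideanSpace.proj 1 : V3 →L[ℝ] ℝ)) v := by
      have h := ((hproj 1).mul (hproj 1)).const_mul (a ^ 2)
      have hfun : (fun w : V3 => a ^ 2 * ((w 1) * (w 1))) = fun w : V3 => a ^ 2 * (w 1) ^ 2 := by
        funext w; ring
      simp only [Pi.mul_apply] at h
      rw [hfun] at h
      refine h.congr_fderiv ?_
      module
    have h3 : HasFDerivAt (fun w : V3 => b ^ 2 * (w 2) ^ 2)
        ((b ^ 2 * (2 * v 2)) • (EuclideanSpace.proj 2 : V3 →L[ℝ] ℝ)) v := by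
      have h := ((hproj 2).mul (hproj 2)).const_mul (b ^ 2)
      have hfun : (fun w : V3 => b ^ 2 * ((w 2) * (w 2))) = fun w : V3 => b ^ 2 * (w 2) ^ 2 := by
        funext w; ring
      simp only [Pi.mul_apply] at h
      rw [hfun] at h
      refine h.congr_fderiv ?_
      module
    exact (h1.sub h2).sub h3
  have hzv : HasFDerivAt (zeta R₁ R₂ ε η)
      ((1 / (2 * Real.sqrt Q)) •
        ((2:ℕ) • innerSL ℝ v - (a ^ 2 * (2 * v 1)) • (EuclideanSpace.proj 1 : V3 →L[ℝ] ℝ)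
          - (b ^ 2 * (2 * v 2)) • (EuclideanSpace.proj 2 : V3 →L[ℝ] ℝ))) v := by
    have := hF.sqrt (by rw [← hQdef]; exact hQne)
    unfold zeta
    simpa [← ha, ← hb, ← hQdef] using this
  have hpdv : ∀ i : Fin 3, pdv i (zeta R₁ R₂ ε η) v =
      (1 / (2 * Real.sqrt Q)) *
        (2 * v i - (a ^ 2 * (2 * v 1)) * (if (1:Fin 3) = i then 1 else 0)
          - (b ^ 2 * (2 * v 2)) * (if (2:Fin 3) = i then 1 else 0)) := by
    intro i
    rw [pdv, hzv.fderiv]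
    simp [EuclideanSpace.single_apply, real_inner_comm,
      EuclideanSpace.inner_single_left, EuclideanSpace.inner_single_right]
    try ring
  -- eta derivative
  have hda : HasDerivAt (fun s : ℝ => ((R₁ - ε * s) / R₁) ^ 2) (2 * a * (-ε / R₁)) η := by
    have h0 : HasDerivAt (fun s : ℝ => (R₁ - ε * s) / R₁) (-ε / R₁) η := by
      simpa [neg_div] using (((hasDerivAt_id η).const_mul ε).const_sub R₁).div_const R₁
    simpa [ha, mul_comm] using h0.fun_pow 2
  have hdb : HasDerivAt (fun s : ℝ => ((R₂ - ε * s) / R₂) ^ 2) (2 * b * (-ε / R₂)) η := by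
    have h0 : HasDerivAt (fun s : ℝ => (R₂ - ε * s) / R₂) (-ε / R₂) η := by
      simpa [neg_div] using (((hasDerivAt_id η).const_mul ε).const_sub R₂).div_const R₂
    simpa [hb, mul_comm] using h0.fun_pow 2
  have hdQ : HasDerivAt (fun s : ℝ => ‖v‖ ^ 2 - ((R₁ - ε * s) / R₁) ^ 2 * (v 1) ^ 2
      - ((R₂ - ε * s) / R₂) ^ 2 * (v 2) ^ 2)
      (0 - 2 * a * (-ε / R₁) * (v 1) ^ 2 - 2 * b * (-ε / R₂) * (v 2) ^ 2) η :=
    ((hasDerivAt_const η _).sub (hda.mul_const _)).sub (hdb.mul_const _)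
  have hdz : deriv (fun s => zeta R₁ R₂ ε s v) η =
      (0 - 2 * a * (-ε / R₁) * (v 1) ^ 2 - 2 * b * (-ε / R₂) * (v 2) ^ 2)
        / (2 * Real.sqrt Q) := by
    have := hdQ.sqrt (by rw [show (‖v‖ ^ 2 - ((R₁ - ε * η) / R₁) ^ 2 * (v 1) ^ 2
      - ((R₂ - ε * η) / R₂) ^ 2 * (v 2) ^ 2) = Q from rfl]; exact hQne)
    have h2 : deriv (fun s => Real.sqrt (‖v‖ ^ 2 - ((R₁ - ε * s) / R₁) ^ 2 * (v 1) ^ 2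
      - ((R₂ - ε * s) / R₂) ^ 2 * (v 2) ^ 2)) η = _ := this.deriv
    simpa [zeta, ← ha, ← hb, ← hQdef] using h2
  rw [hdz, hpdv 0, hpdv 1, hpdv 2]
  norm_num [Fin.ext_iff]
  have haR : R₁ - ε * η = a * R₁ := by rw [ha, div_mul_cancel₀ _ (ne_of_gt hR₁)]
  have hbR : R₂ - ε * η = b * R₂ := by rw [hb, div_mul_cancel₀ _ (ne_of_gt hR₂)]
  have hane : a ≠ 0 := ne_of_gt (div_pos (by linarith) hR₁)
  have hbne : b ≠ 0 := ne_of_gt (div_pos (by linarith) hR₂)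
  rw [haR, hbR]
  field_simp
  ring


end
end

section
/- There exists a constant C>0 (depending only on q₀) such that for all u,v∈ℝ³ with u≠v: |k(u,v)| ≤ C(|u−v| + 1/|u−v|)·exp(−(1/8)|u−v|² − (1/8)(|u|²−|v|²)²/|u−v|²). -/
open Real MeasureTheory

noncomputable section

/-- Pointwise bound on the hard-sphere Boltzmann kernel k. -/
theorem kernel_pointwise_bound (q₀ : ℝ) (hq₀ : 0 < q₀) :
    ∃ C : ℝ, 0 < C ∧ ∀ u v : V3, u ≠ v →
      |ker q₀ u v| ≤ C * (‖u - v‖ + 1 / ‖u - v‖) *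
        Real.exp (-(1/8) * ‖u - v‖ ^ 2
          - (1/8) * (‖u‖ ^ 2 - ‖v‖ ^ 2) ^ 2 / ‖u - v‖ ^ 2) := by
  refine ⟨2 * π * q₀, by positivity, fun u v huv => ?_⟩
  have hr0 : (0:ℝ) < ‖u - v‖ := by
    rw [norm_pos_iff, sub_ne_zero]; exact huv
  set r : ℝ := ‖u - v‖ with hrdef
  set d : ℝ := ‖u‖ ^ 2 - ‖v‖ ^ 2 with hddef
  set E : ℝ := -(1/8) * r ^ 2 - (1/8) * d ^ 2 / r ^ 2 with hEdef
  have hEpos : (0:ℝ) < Real.exp E := Real.exp_pos E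
  -- Cauchy-Schwarz : d² ≤ r² * ‖u+v‖²
  have hid : (inner ℝ (u - v) (u + v) : ℝ) = d := by
    rw [inner_sub_left, inner_add_right, inner_add_right, real_inner_comm v u,
      real_inner_self_eq_norm_sq, real_inner_self_eq_norm_sq]
    ring
  have hcs0 : |(inner ℝ (u - v) (u + v) : ℝ)| ≤ ‖u - v‖ * ‖u + v‖ :=
    abs_real_inner_le_norm _ _
  have hcs : d ^ 2 ≤ r ^ 2 * ‖u + v‖ ^ 2 := by
    have := sq_le_sq' (neg_le_of_abs_le hcs0) (le_of_abs_le hcs0)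
    rw [hid] at this
    calc d ^ 2 ≤ (‖u - v‖ * ‖u + v‖) ^ 2 := this
      _ = r ^ 2 * ‖u + v‖ ^ 2 := by rw [← hrdef]; ring
  -- parallelogram
  have hpar : r ^ 2 + ‖u + v‖ ^ 2 = 2 * ‖u‖ ^ 2 + 2 * ‖v‖ ^ 2 := by
    have h1 := norm_sub_sq_real u v
    have h2 := norm_add_sq_real u v
    rw [← hrdef] at h1
    linarith
  have hr2 : (0:ℝ) < r ^ 2 := by positivity
  have hdr : d ^ 2 / r ^ 2 ≤ ‖u + v‖ ^ 2 := by
    rw [div_le_iff₀ hr2]; linarith [hcs]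
  have hd2 : (0:ℝ) ≤ d ^ 2 / r ^ 2 := by positivity
  -- bound on k₁
  have hk1 : |ker1 q₀ u v| ≤ π * q₀ * r * Real.exp E := by
    rw [ker1, ← hrdef]
    rw [abs_of_nonneg (by positivity)]
    have hexp : -‖u‖ ^ 2 / 2 - ‖v‖ ^ 2 / 2 ≤ E := by
      have hE' : E = -(1/8) * r ^ 2 - (1/8) * (d ^ 2 / r ^ 2) := by
        rw [hEdef]; ring
      rw [hE']
      linarith [hdr, hpar, sq_nonneg ‖u‖, sq_nonneg ‖v‖]
    exact mul_le_mul_of_nonneg_left (Real.exp_le_exp.2 hexp) (by positivity)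
  -- bound on k₂
  have hk2 : |ker2 q₀ u v| ≤ 2 * π * q₀ / r * Real.exp E := by
    rw [ker2, ← hrdef, ← hddef]
    rw [abs_of_nonneg (by positivity)]
    have hexp : -r ^ 2 / 4 - d ^ 2 / (4 * r ^ 2) ≤ E := by
      have hE' : E = -(1/8) * r ^ 2 - (1/8) * (d ^ 2 / r ^ 2) := by
        rw [hEdef]; ring
      have h4 : d ^ 2 / (4 * r ^ 2) = (d ^ 2 / r ^ 2) / 4 := by ring
      rw [hE', h4]
      linarith [hd2, hr2.le]
    exact mul_le_mul_of_nonneg_left (Real.exp_le_exp.2 hexp) (by positivity)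
  have habs : |ker q₀ u v| ≤ |ker2 q₀ u v| + |ker1 q₀ u v| := by
    rw [ker]; exact abs_sub _ _
  have hfin : |ker2 q₀ u v| + |ker1 q₀ u v|
      ≤ 2 * π * q₀ * (r + 1 / r) * Real.exp E := by
    have h1 : π * q₀ * r * Real.exp E ≤ 2 * π * q₀ * r * Real.exp E := by
      have : (0:ℝ) ≤ π * q₀ * r * Real.exp E := by positivity
      linarith
    have h2 : 2 * π * q₀ / r * Real.exp E = 2 * π * q₀ * (1 / r) * Real.exp E := by
      ring
    calc |ker2 q₀ u v| + |ker1 q₀ u v|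
        ≤ 2 * π * q₀ / r * Real.exp E + 2 * π * q₀ * r * Real.exp E := by
          linarith [hk1, hk2, h1]
      _ = 2 * π * q₀ * (r + 1 / r) * Real.exp E := by rw [h2]; ring
  calc |ker q₀ u v| ≤ |ker2 q₀ u v| + |ker1 q₀ u v| := habs
    _ ≤ 2 * π * q₀ * (r + 1 / r) * Real.exp E := hfin

end
end
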